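/- Positive integers a and y satisfy a^2 - 2*y^2 = 2 if and only if there exists an odd positive integer k such that, as real numbers, a = ((2 + √2)^k + (2 - √2)^k)/(2 * √(2^(k-1))) and y = ((2 + √2)^k - (2 - √2)^k)/(2 * √(2^k)). -/

import Mathlib

noncomputable def Fm (k : ℕ) : ℝ :=
  ((2 + Real.sqrt 2) ^ k + (2 - Real.sqrt 2) ^ k) / (2 * Real.sqrt (2 ^ (k - 1)))

noncomputable def Gm (k : ℕ) : ℝ :=
  ((2 + Real.sqrt 2) ^ k - (2 - Real.sqrt 2) ^ k) / (2 * Real.sqrt (2 ^ k))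

lemma sqrt2_sq : Real.sqrt 2 ^ 2 = 2 := Real.sq_sqrt (by norm_num)

lemma Fm_one : Fm 1 = 2 := by
  simp [Fm]

lemma Gm_one : Gm 1 = 1 := by
  have h : Real.sqrt 2 > 0 := Real.sqrt_pos.mpr (by norm_num)
  simp [Gm]
  field_simp
  ring

lemma step (m : ℕ) :
    Fm (m + 3) = 3 * Fm (m + 1) + 4 * Gm (m + 1) ∧
    Gm (m + 3) = 2 * Fm (m + 1) + 3 * Gm (m + 1) := by
  have ht : Real.sqrt 2 ^ 2 = 2 := sqrt2_sq
  have htpos : (0:ℝ) < Real.sqrt 2 := Real.sqrt_pos.mpr (by norm_num)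
  set t := Real.sqrt 2 with htdef
  have hr : (0:ℝ) < Real.sqrt (2 ^ m) := Real.sqrt_pos.mpr (by positivity)
  set r := Real.sqrt (2 ^ m) with hrdef
  have h1 : Real.sqrt (2 ^ (m + 1)) = t * r := by
    rw [pow_succ, mul_comm ((2:ℝ)^m), Real.sqrt_mul (by norm_num)]
  have hs4 : Real.sqrt 4 = 2 := by
    rw [show (4:ℝ) = 2^2 by norm_num, Real.sqrt_sq (by norm_num)]
  have h2' : Real.sqrt (2 ^ (m + 2)) = 2 * r := by
    rw [show (2:ℝ) ^ (m+2) = 4 * 2 ^ m by ring, Real.sqrt_mul (by norm_num), hs4]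
  have h3 : Real.sqrt (2 ^ (m + 3)) = 2 * (t * r) := by
    rw [show (2:ℝ) ^ (m+3) = 2 * (4 * 2 ^ m) by ring, Real.sqrt_mul (by norm_num),
      Real.sqrt_mul (by norm_num), hs4, ← htdef, ← hrdef]; ring
  have e1 : (2 + t) ^ (m+3) = (2+t)^(m+1) * (6 + 4*t) := by
    rw [show m+3 = (m+1)+2 by ring, pow_add]
    congr 1
    linear_combination ht
  have e2 : (2 - t) ^ (m+3) = (2-t)^(m+1) * (6 - 4*t) := by
    rw [show m+3 = (m+1)+2 by ring, pow_add]
    congr 1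
    linear_combination ht
  set X := (2 + t) ^ (m+1)
  set Z := (2 - t) ^ (m+1)
  unfold Fm Gm
  simp only [show m+3-1 = m+2 from rfl, show m+1-1 = m from rfl, e1, e2, h1, h2', h3, ← hrdef, ← htdef]
  constructor
  · field_simp
    simp only [X, Z]
    linear_combination (4*(2+t)^(m+1) - 4*(2-t)^(m+1)) * ht
  · field_simp
    simp only [X, Z]
    ring_nf

lemma backward : ∀ k : ℕ, Odd k → ∀ a y : ℤ, (a:ℝ) = Fm k → (y:ℝ) = Gm k →
    a ^ 2 - 2 * y ^ 2 = 2 := by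
  intro k
  induction k using Nat.strong_induction_on with
  | _ k ih =>
    intro hk a y hFa hGy
    obtain ⟨j, rfl⟩ := hk
    match j with
    | 0 =>
      have ha2 : (a:ℝ) = 2 := by rw [hFa]; exact Fm_one
      have hy1 : (y:ℝ) = 1 := by rw [hGy]; exact Gm_one
      have ha2' : a = 2 := by exact_mod_cast ha2
      have hy1' : y = 1 := by exact_mod_cast hy1
      subst ha2' hy1'; norm_num
    | j + 1 =>
      have hidx : 2 * (j+1) + 1 = 2*j + 3 := by omega
      rw [hidx] at hFa hGy
      have hF := (step (2*j)).1
      have hG := (step (2*j)).2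
      have hFa' : ((3*a - 4*y : ℤ):ℝ) = Fm (2*j+1) := by
        push_cast; rw [hFa, hGy]; linear_combination (3:ℝ)*hF - 4*hG
      have hGy' : ((3*y - 2*a : ℤ):ℝ) = Gm (2*j+1) := by
        push_cast; rw [hFa, hGy]; linear_combination (3:ℝ)*hG - 2*hF
      have h' := ih (2*j+1) (by omega) ⟨j, by ring⟩ _ _ hFa' hGy'
      linear_combination h'

lemma forward : ∀ n : ℕ, ∀ y a : ℤ, y ≤ n → 0 < y → 0 < a → a ^ 2 - 2 * y ^ 2 = 2 →
    ∃ k : ℕ, Odd k ∧ 0 < k ∧ (a:ℝ) = Fm k ∧ (y:ℝ) = Gm k := by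
  intro n
  induction n with
  | zero => intro y a h hy _ _; omega
  | succ n ih =>
    intro y a hyn hy ha heq
    by_cases hy2 : y ≤ 2
    · interval_cases y
      · have ha2 : a = 2 := by nlinarith
        exact ⟨1, odd_one, one_pos, by rw [ha2]; exact_mod_cast Fm_one.symm,
          by exact_mod_cast Gm_one.symm⟩
      · exfalso
        have h3 : a ≤ 3 := by nlinarith
        interval_cases a <;> omega
    · push_neg at hy2
      have hay : y < a := by nlinarith
      have hpa : 0 < 3*a - 4*y := by nlinarith
      have hpy : 0 < 3*y - 2*a := by nlinarith
      have hlt : 3*y - 2*a ≤ (n:ℤ) := by omega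
      have heq' : (3*a - 4*y) ^ 2 - 2 * (3*y - 2*a) ^ 2 = 2 := by linear_combination heq
      obtain ⟨k, hk, hk0, hF, hG⟩ := ih (3*y - 2*a) (3*a - 4*y) hlt hpy hpa heq'
      obtain ⟨j, rfl⟩ := hk
      refine ⟨2*j+1+2, ⟨j+1, by ring⟩, by omega, ?_, ?_⟩
      · have hidx : 2*j+1+2 = 2*j+3 := by omega
        have hstep := (step (2*j)).1
        rw [hidx, hstep, ← hF, ← hG]
        push_cast
        ring
      · have hidx : 2*j+1+2 = 2*j+3 := by omega
        have hstep := (step (2*j)).2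
        rw [hidx, hstep, ← hF, ← hG]
        push_cast
        ring


/-- Positive integers `a`, `y` satisfy `a^2 - 2y^2 = 2` if and only if there is an odd
positive integer `k` with `a = ((2+√2)^k + (2-√2)^k)/(2√(2^(k-1)))` and
`y = ((2+√2)^k - (2-√2)^k)/(2√(2^k))` (as real numbers). -/
theorem mahler_solutions (a y : ℤ) (ha : 0 < a) (hy : 0 < y) :
    a ^ 2 - 2 * y ^ 2 = 2 ↔
      ∃ k : ℕ, Odd k ∧ 0 < k ∧
        (a : ℝ) = ((2 + Real.sqrt 2) ^ k + (2 - Real.sqrt 2) ^ k) /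
            (2 * Real.sqrt (2 ^ (k - 1))) ∧
        (y : ℝ) = ((2 + Real.sqrt 2) ^ k - (2 - Real.sqrt 2) ^ k) /
            (2 * Real.sqrt (2 ^ k)) := by
  constructor
  · intro h
    obtain ⟨k, hk, hk0, hF, hG⟩ := forward y.toNat y a (by omega) hy ha h
    exact ⟨k, hk, hk0, hF, hG⟩
  · rintro ⟨k, hk, hk0, hF, hG⟩
    exact backward k hk a y hF hG
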